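/- Let m ≥ 2 and n ≥ 1 be integers, let p be a positive integer coprime to m·n, and set ζ = exp(2πi·p/(m·n)) ∈ ℂ. Let λ = (λ^{(0)}, …, λ^{(m−1)}) be an m-tuple of integer partitions with |λ^{(0)}| + ⋯ + |λ^{(m−1)}| = n. For s = 0,…,m−1 put Q_s = ζ if s = 0 and Q_s = exp(2πi·s/m) if 1 ≤ s ≤ m−1. For partitions α, β, a cell of α is a pair (i,j) with i ≥ 1 and 1 ≤ j ≤ α_i, the conjugate is β′_j = #{ i ≥ 1 : β_i ≥ j }, and the generalized hook number is h^{α,β}_{i,j} = α_i − i + β′_j − j + 1 ∈ ℤ. Then Π_{s=0}^{m−1} Π_{(i,j) cell of λ^{(s)}} Π_{t=0}^{m−1} ( ζ^{h^{λ^{(s)},λ^{(t)}}_{i,j}} · Q_s · Q_t^{−1} − 1 ) = 0 (with ζ^h the integer power of the nonzero complex number ζ) if and only if there exists k with 0 ≤ k ≤ n such that λ^{(0)} is the one-part partition (n−k) (the empty partition if k = n), λ^{(p mod m)} is the partition (1^k) with k parts equal to 1 (the empty partition if k = 0), and λ^{(s)} is the empty partition for every other index s. -/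

import Mathlib

/-- The `i`-th part (`1`-indexed) of a partition presented as a (weakly decreasing)
list of its positive parts; parts beyond the length are `0`. -/
def partOf (l : List ℕ) (i : ℕ) : ℕ := l.getD (i - 1) 0

/-- The `j`-th part of the conjugate partition: the number of parts that are `≥ j`. -/
def conjOf (l : List ℕ) (j : ℕ) : ℕ := (l.filter (fun x => j ≤ x)).length

/-- The generalized hook number `h^{α,β}_{i,j} = α_i − i + β′_j − j + 1`. -/
def hookNum (α β : List ℕ) (i j : ℕ) : ℤ :=
  (partOf α i : ℤ) - (i : ℤ) + (conjOf β j : ℤ) - (j : ℤ) + 1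

/-- The product of `F i j` over all cells `(i,j)` (with `i ≥ 1`, `1 ≤ j ≤ α_i`)
of the partition `α`, presented as a list of its parts. -/
noncomputable def cellProd (α : List ℕ) (F : ℕ → ℕ → ℂ) : ℂ :=
  ∏ i ∈ Finset.range α.length, ∏ j ∈ Finset.Icc 1 (partOf α (i + 1)), F (i + 1) j

namespace SchurAux

theorem exp_unit_eq_one_iff (M : ℕ) (hM : 0 < M) (e : ℤ) :
    Complex.exp (e * (2 * Real.pi * Complex.I / M)) = 1 ↔ (M : ℤ) ∣ e := by
  rw [Complex.exp_eq_one_iff]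
  have hM0 : (M : ℂ) ≠ 0 := Nat.cast_ne_zero.2 hM.ne'
  have h2 : (2 * (Real.pi : ℂ) * Complex.I) ≠ 0 := by
    simp [Real.pi_ne_zero, Complex.I_ne_zero]
  constructor
  · rintro ⟨k, hk⟩
    refine ⟨k, ?_⟩
    have h3 : (e : ℂ) * (2 * Real.pi * Complex.I) = (M * k : ℤ) * (2 * Real.pi * Complex.I) := by
      push_cast
      field_simp at hk
      linear_combination (2 * (Real.pi:ℂ) * Complex.I) * hk
    exact_mod_cast mul_right_cancel₀ h2 h3
  · rintro ⟨k, rfl⟩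
    exact ⟨k, by field_simp; push_cast; ring⟩

lemma length_le_sum (l : List ℕ) (h : ∀ x ∈ l, 0 < x) : l.length ≤ l.sum := by
  induction l with
  | nil => simp
  | cons a t ih =>
    simp only [List.length_cons, List.sum_cons]
    have := h a (by simp)
    have := ih (fun x hx => h x (by simp [hx]))
    omega

lemma mul_length_le_sum (l : List ℕ) (j : ℕ) (h : ∀ x ∈ l, j ≤ x) : j * l.length ≤ l.sum := by
  induction l with
  | nil => simp
  | cons a t ih =>
    simp only [List.length_cons, List.sum_cons]
    have := h a (by simp)
    have := ih (fun x hx => h x (by simp [hx]))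
    calc j * (t.length + 1) = j * t.length + j := by ring
    _ ≤ t.sum + a := by omega
    _ = a + t.sum := by omega

lemma filter_sum_le (l : List ℕ) (p : ℕ → Bool) : (l.filter p).sum ≤ l.sum := by
  induction l with
  | nil => simp
  | cons a t ih =>
    by_cases h : p a
    · simp [List.filter_cons, h]; omega
    · simp only [List.filter_cons, h, Bool.false_eq_true, if_false, List.sum_cons]
      omega

lemma conj_mul_le (l : List ℕ) (j : ℕ) : j * conjOf l j ≤ l.sum := by
  unfold conjOf
  have h1 : j * (l.filter (fun x => j ≤ x)).length ≤ (l.filter (fun x => j ≤ x)).sum :=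
    mul_length_le_sum _ _ (by intro x hx; simpa using (List.mem_filter.1 hx).2)
  have h2 := filter_sum_le l (fun x => j ≤ x)
  omega

lemma conj_le_length (l : List ℕ) (j : ℕ) : conjOf l j ≤ l.length :=
  List.length_filter_le _ _

lemma part_bound (l : List ℕ) (i : ℕ) (hp : ∀ x ∈ l, 0 < x)
    (hi1 : 1 ≤ i) (hi : i ≤ l.length) : partOf l i + (i - 1) ≤ l.sum := by
  have hlt : i - 1 < l.length := by omega
  have hpart : partOf l i = l[i-1] := List.getD_eq_getElem l 0 hlt
  have hsplit := List.sum_take_add_sum_drop l (i-1)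
  have h1 : (i-1) ≤ (l.take (i-1)).sum := by
    have h2 := length_le_sum (l.take (i-1)) (fun x hx => hp x (List.mem_of_mem_take hx))
    have h3 : (l.take (i-1)).length = i - 1 := by simp [List.length_take]; omega
    omega
  have h2 : l[i-1] ≤ (l.drop (i-1)).sum := by
    rw [List.drop_eq_getElem_cons hlt, List.sum_cons]
    exact Nat.le_add_right _ _
  omega

lemma conj_ge (l : List ℕ) (i j : ℕ) (hs : l.Pairwise (· ≥ ·))
    (hi1 : 1 ≤ i) (hi : i ≤ l.length) (hj : j ≤ partOf l i) : i ≤ conjOf l j := by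
  have hlt : i - 1 < l.length := by omega
  have hpart : partOf l i = l[i-1] := List.getD_eq_getElem l 0 hlt
  have hall : ∀ x ∈ l.take i, j ≤ x := by
    intro x hx
    rw [List.mem_take_iff_getElem] at hx
    obtain ⟨k, hk, rfl⟩ := hx
    have hkl : k < l.length := lt_of_lt_of_le (lt_min_iff.1 hk).1 hi
    have : l[i-1] ≤ l[k] := by
      rcases eq_or_lt_of_le (show k ≤ i - 1 by have := (lt_min_iff.1 hk).1; omega) with h | h
      · exact le_of_eq (by congr 1; omega)
      · exact List.pairwise_iff_getElem.1 hs k (i-1) hkl hlt h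
    omega
  have hsub : List.Sublist ((l.take i).filter (fun x => j ≤ x)) (l.filter (fun x => j ≤ x)) :=
    (List.take_sublist i l).filter _
  have hlen : ((l.take i).filter (fun x => j ≤ x)).length = i := by
    rw [List.filter_eq_self.2 (by intro x hx; simpa using hall x hx)]
    simp [List.length_take]; omega
  have := hsub.length_le
  unfold conjOf
  omega

lemma conj_one (l : List ℕ) (hp : ∀ x ∈ l, 0 < x) : conjOf l 1 = l.length := by
  unfold conjOf
  rw [List.filter_eq_self.2 (by intro x hx; have := hp x hx; simp only [decide_eq_true_eq]; omega)]

lemma eq_single (l : List ℕ) (hp : ∀ x ∈ l, 0 < x) (h1 : partOf l 1 = l.sum)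
    (hne : 1 ≤ l.sum) : l = [l.sum] := by
  match l with
  | [] => simp at hne
  | a :: t =>
    have ha : partOf (a :: t) 1 = a := rfl
    rw [ha] at h1
    simp only [List.sum_cons] at h1 hne ⊢
    have ht : t.sum = 0 := by omega
    have htn : t = [] := by
      cases t with
      | nil => rfl
      | cons b u =>
        have := hp b (by simp)
        simp only [List.sum_cons] at ht
        omega
    subst htn
    simp only [List.sum_nil, Nat.add_zero]

lemma eq_replicate_of_len (l : List ℕ) (hp : ∀ x ∈ l, 0 < x) (h : l.sum = l.length) :
    l = List.replicate l.length 1 := by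
  induction l with
  | nil => simp
  | cons a t ih =>
    simp only [List.sum_cons, List.length_cons] at h
    have ha := hp a (by simp)
    have ht := length_le_sum t (fun x hx => hp x (by simp [hx]))
    have ha1 : a = 1 := by omega
    have hts : t.sum = t.length := by omega
    have := ih (fun x hx => hp x (by simp [hx])) hts
    simp only [List.length_cons, List.replicate_succ, ha1]
    exact congrArg _ this

lemma eq_nil_of_sum (l : List ℕ) (hp : ∀ x ∈ l, 0 < x) (h : l.sum = 0) : l = [] := by
  cases l with
  | nil => rfl
  | cons a t => have := hp a (by simp); simp only [List.sum_cons] at h; omega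

lemma int_dvd_interval (n x : ℤ) (hn : 0 < n) (hd : n ∣ x) (h1 : -n < x) (h2 : x ≤ n) :
    x = 0 ∨ x = n := by
  rcases hd with ⟨e, rfl⟩
  have he1 : e ≤ 1 := by
    by_contra h
    push_neg at h
    nlinarith
  have he0 : 0 ≤ e := by
    by_contra h
    push_neg at h
    nlinarith
  interval_cases e
  · left; ring
  · right; ring

lemma int_dvd_zero_of_bounds (n x : ℤ) (hn : 0 < n) (hd : n ∣ x) (h1 : -n < x) (h2 : x < n) :
    x = 0 := by
  rcases int_dvd_interval n x hn hd h1 (le_of_lt h2) with h | h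
  · exact h
  · omega

end SchurAux

open SchurAux

/-- For an `m`-multipartition `Λ` of `n` and `p` coprime to `mn`, the triple product
appearing in Chlouveraki's formula for the Schur element, evaluated at `ζ = ζ_{mn}^p`,
vanishes if and only if `Λ` is the multipartition `((n−k), ∅, …, ∅, (1^k), ∅, …, ∅)`
(with `(1^k)` in slot `p mod m`) corresponding to `⋀^k V^{σ_p}` for some `0 ≤ k ≤ n`. -/
theorem schur_vanishing_iff (m n p : ℕ) (hm : 2 ≤ m) (hn : 1 ≤ n) (hp : 1 ≤ p)
    (hcop : Nat.Coprime p (m * n))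
    (Λ : ℕ → List ℕ)
    (hsort : ∀ s < m, (Λ s).Pairwise (· ≥ ·))
    (hpos : ∀ s < m, ∀ x ∈ Λ s, 0 < x)
    (hsize : ∑ s ∈ Finset.range m, (Λ s).sum = n) :
    let ζ : ℂ := Complex.exp (2 * Real.pi * Complex.I * p / (m * n))
    let Q : ℕ → ℂ := fun s =>
      if s = 0 then ζ else Complex.exp (2 * Real.pi * Complex.I * s / m)
    (∏ s ∈ Finset.range m, cellProd (Λ s) (fun i j =>
        ∏ t ∈ Finset.range m, (ζ ^ hookNum (Λ s) (Λ t) i j * Q s * (Q t)⁻¹ - 1))) = 0 ↔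
      ∃ k ≤ n, Λ 0 = (if k = n then [] else [n - k]) ∧
        Λ (p % m) = List.replicate k 1 ∧
        ∀ s < m, s ≠ 0 → s ≠ p % m → Λ s = [] := by
  intro ζ Q
  set M := m * n with hMdef
  have hM : 0 < M := by positivity
  set c : ℂ := 2 * Real.pi * Complex.I / M with hcdef
  have hMC : (M : ℂ) ≠ 0 := Nat.cast_ne_zero.2 hM.ne'
  have hmC : (m : ℂ) ≠ 0 := Nat.cast_ne_zero.2 (by omega)
  have hζ : ζ = Complex.exp ((p : ℤ) * c) := by
    show Complex.exp _ = _
    congr 1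
    rw [hcdef, hMdef]
    push_cast
    ring
  set b : ℕ → ℤ := fun s => if s = 0 then (p : ℤ) else (n : ℤ) * s with hbdef
  have hQ : ∀ s, Q s = Complex.exp (b s * c) := by
    intro s
    by_cases hs : s = 0
    · subst hs
      show ζ = _
      rw [hζ]
      simp [hbdef]
    · have h1 : Q s = Complex.exp (2 * Real.pi * Complex.I * s / m) := if_neg hs
      rw [h1]
      congr 1
      rw [hcdef, hbdef, hMdef]
      simp only [if_neg hs]
      push_cast
      have hnC : (n : ℂ) ≠ 0 := Nat.cast_ne_zero.2 (by omega)
      field_simp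
  have hfac : ∀ s t : ℕ, ∀ h : ℤ,
      (ζ ^ h * Q s * (Q t)⁻¹ - 1 = 0) ↔ (M : ℤ) ∣ (h * p + b s - b t) := by
    intro s t h
    rw [sub_eq_zero]
    have heq : ζ ^ h * Q s * (Q t)⁻¹ = Complex.exp (((h * p + b s - b t : ℤ)) * c) := by
      rw [hζ, hQ s, hQ t, ← Complex.exp_int_mul, ← Complex.exp_neg, ← Complex.exp_add,
        ← Complex.exp_add]
      congr 1
      push_cast
      ring
    rw [heq, hcdef]
    exact exp_unit_eq_one_iff M hM _
  have hiff : (∏ s ∈ Finset.range m, cellProd (Λ s) (fun i j =>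
        ∏ t ∈ Finset.range m, (ζ ^ hookNum (Λ s) (Λ t) i j * Q s * (Q t)⁻¹ - 1))) = 0 ↔
      ∃ s, s < m ∧ ∃ i, i < (Λ s).length ∧ ∃ j, (1 ≤ j ∧ j ≤ partOf (Λ s) (i+1)) ∧
        ∃ t, t < m ∧ (M : ℤ) ∣ (hookNum (Λ s) (Λ t) (i+1) j * p + b s - b t) := by
    simp only [cellProd, Finset.prod_eq_zero_iff, Finset.mem_range, Finset.mem_Icc]
    constructor
    · rintro ⟨s, hs, i, hi, j, ⟨hj1, hj2⟩, t, ht, hzero⟩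
      exact ⟨s, hs, i, hi, j, ⟨hj1, hj2⟩, t, ht, (hfac s t _).1 hzero⟩
    · rintro ⟨s, hs, i, hi, j, ⟨hj1, hj2⟩, t, ht, hdvd⟩
      exact ⟨s, hs, i, hi, j, ⟨hj1, hj2⟩, t, ht, (hfac s t _).2 hdvd⟩
  rw [hiff]
  -- common arithmetic facts
  have hnZ : (0:ℤ) < n := by exact_mod_cast hn
  have hn0 : (n:ℤ) ≠ 0 := ne_of_gt hnZ
  have hNle : ∀ u, u < m → (Λ u).sum ≤ n := by
    intro u hu
    rw [← hsize]
    exact Finset.single_le_sum (f := fun x => (Λ x).sum) (fun i _ => Nat.zero_le _)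
      (Finset.mem_range.2 hu)
  have hpair : ∀ u v, u < m → v < m → u ≠ v → (Λ u).sum + (Λ v).sum ≤ n := by
    intro u v hu hv huv
    have hsub : ({u, v} : Finset ℕ) ⊆ Finset.range m := by
      intro x hx
      simp only [Finset.mem_insert, Finset.mem_singleton] at hx
      rcases hx with rfl | rfl <;> simp [hu, hv]
    calc (Λ u).sum + (Λ v).sum = ∑ x ∈ ({u, v} : Finset ℕ), (Λ x).sum :=
          (Finset.sum_pair (f := fun x => (Λ x).sum) huv).symm
    _ ≤ ∑ x ∈ Finset.range m, (Λ x).sum := Finset.sum_le_sum_of_subset hsub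
    _ = n := hsize
  have htriple : ∀ u v, u < m → v < m → u ≠ v → (Λ u).sum + (Λ v).sum = n →
      ∀ w, w < m → w ≠ u → w ≠ v → (Λ w).sum = 0 := by
    intro u v hu hv huv hsum w hw hwu hwv
    have hsub : ({w, u, v} : Finset ℕ) ⊆ Finset.range m := by
      intro x hx
      simp only [Finset.mem_insert, Finset.mem_singleton] at hx
      rcases hx with rfl | rfl | rfl <;> simp [hu, hv, hw]
    have hsumeq : ∑ x ∈ ({w, u, v} : Finset ℕ), (Λ x).sum
        = (Λ w).sum + ((Λ u).sum + (Λ v).sum) := by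
      rw [Finset.sum_insert (by simp [hwu, hwv]), Finset.sum_pair huv]
    have hle : ∑ x ∈ ({w, u, v} : Finset ℕ), (Λ x).sum ≤ n := by
      rw [← hsize]; exact Finset.sum_le_sum_of_subset hsub
    omega
  have hcop_n : Nat.Coprime p n := hcop.coprime_dvd_right (dvd_mul_left n m)
  have hcopM : IsCoprime ((m*n : ℕ):ℤ) (p:ℤ) := (hcop.symm).isCoprime
  have hcopn : IsCoprime ((n:ℕ):ℤ) (p:ℤ) := (hcop_n.symm).isCoprime
  have hnM : (n:ℤ) ∣ ((m*n : ℕ):ℤ) := ⟨m, by push_cast; ring⟩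
  have hmcancel : ∀ z : ℤ, ((m*n:ℕ):ℤ) ∣ (n:ℤ) * z → (m:ℤ) ∣ z := by
    rintro z ⟨k, hk⟩
    refine ⟨k, ?_⟩
    apply mul_left_cancel₀ hn0
    rw [hk]; push_cast; ring
  have hr0 : p % m ≠ 0 := by
    intro h
    have hm1 : m ∣ p := Nat.dvd_of_mod_eq_zero h
    have hcopm : Nat.Coprime p m := hcop.coprime_dvd_right (dvd_mul_right m n)
    have h2 : m ∣ Nat.gcd p m := Nat.dvd_gcd hm1 dvd_rfl
    rw [hcopm] at h2
    have := Nat.le_of_dvd one_pos h2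
    omega
  have hpm : (p:ℤ) = m * ((p / m : ℕ):ℤ) + ((p % m : ℕ):ℤ) := by
    exact_mod_cast (Nat.div_add_mod p m).symm
  have hmodeq : ∀ t q : ℕ, t < m → (m:ℤ) ∣ (q:ℤ) - t → t = q % m := by
    intro t q ht h
    have h6 := Int.modEq_iff_dvd.2 h
    unfold Int.ModEq at h6
    have h7 : (t:ℤ) % m = t := Int.emod_eq_of_lt (by positivity) (by exact_mod_cast ht)
    have h8 : ((q % m : ℕ) : ℤ) = (q:ℤ) % m := by push_cast; ring
    have h9 : ((q % m : ℕ) : ℤ) = (t : ℤ) := by rw [h8, ← h6, h7]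
    exact_mod_cast h9.symm
  constructor
  · rintro ⟨s, hs, i, hi, j, ⟨hj1, hj2⟩, t, ht, hdvd⟩
    have hsor_s := hsort s hs
    have hpos_s := hpos s hs
    have hsor_t := hsort t ht
    have hpos_t := hpos t ht
    have hi'1 : 1 ≤ i + 1 := by omega
    have hi'len : i + 1 ≤ (Λ s).length := by omega
    have hlenNs := length_le_sum _ hpos_s
    have hlenNt := length_le_sum _ hpos_t
    have hA := part_bound (Λ s) (i+1) hpos_s hi'1 hi'len
    have hClen := conj_le_length (Λ t) j
    have hNs := hNle s hs
    have hNt := hNle t ht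
    have hHdef : hookNum (Λ s) (Λ t) (i+1) j
        = (partOf (Λ s) (i+1) : ℤ) - ((i+1 : ℕ) : ℤ) + (conjOf (Λ t) j : ℤ) - (j:ℤ) + 1 := rfl
    by_cases hst : s = t
    · exfalso
      subst hst
      have hCge := conj_ge (Λ s) (i+1) j hsor_s hi'1 hi'len hj2
      have h1 : ((m*n:ℕ):ℤ) ∣ hookNum (Λ s) (Λ s) (i+1) j * p := by
        have := hdvd
        rw [add_sub_cancel_right] at this
        exact this
      have h2 : ((m*n:ℕ):ℤ) ∣ hookNum (Λ s) (Λ s) (i+1) j := hcopM.dvd_of_dvd_mul_right h1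
      have hge : 1 ≤ hookNum (Λ s) (Λ s) (i+1) j := by rw [hHdef]; push_cast; omega
      have h2n : 2 * n ≤ m * n := Nat.mul_le_mul_right n hm
      have hlt : hookNum (Λ s) (Λ s) (i+1) j < ((m*n:ℕ):ℤ) := by
        rw [hHdef]; push_cast; omega
      have := Int.le_of_dvd (by omega) h2
      omega
    · have hpst := hpair s t hs ht hst
      by_cases hs0 : s = 0
      · -- s = 0, t ≠ 0
        subst hs0
        have ht0 : t ≠ 0 := fun h => hst (h.symm ▸ rfl)
        set H := hookNum (Λ 0) (Λ t) (i+1) j with hHset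
        have hdvd' : ((m*n:ℕ):ℤ) ∣ H * p + p - (n:ℤ) * t := by
          have : b 0 = (p:ℤ) := by simp [hbdef]
          have h2 : b t = (n:ℤ) * t := by simp [hbdef, ht0]
          rw [← this, ← h2]
          exact hdvd
        have hnE : (n:ℤ) ∣ H * p + p - (n:ℤ) * t := hnM.trans hdvd'
        have h1 : (n:ℤ) ∣ (H + 1) * p := by
          have heq : (H + 1) * (p:ℤ) = (H * p + p - (n:ℤ) * t) + (n:ℤ) * t := by ring
          rw [heq]
          exact dvd_add hnE (dvd_mul_right _ _)
        have h3 : (n:ℤ) ∣ H + 1 := hcopn.dvd_of_dvd_mul_right h1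
        have hup : H + 1 ≤ n := by rw [hHdef]; push_cast; omega
        have hlow : -(n:ℤ) < H + 1 := by rw [hHdef]; push_cast; omega
        rcases int_dvd_interval n (H+1) hnZ h3 hlow hup with h0 | hHn
        · exfalso
          have hMnt : ((m*n:ℕ):ℤ) ∣ (n:ℤ) * t := by
            have heq : (n:ℤ) * t = (H+1) * p - (H * p + p - (n:ℤ) * t) := by ring
            rw [heq, h0, zero_mul, zero_sub]
            exact dvd_neg.2 hdvd'
          have hmt := hmcancel _ hMnt
          have h5 := Int.le_of_dvd (by exact_mod_cast Nat.pos_of_ne_zero ht0) hmt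
          have : (m:ℤ) ≤ t := h5
          have : (t:ℤ) < m := by exact_mod_cast ht
          omega
        · -- H + 1 = n : shape case, k < n
          have hMnpt : ((m*n:ℕ):ℤ) ∣ (n:ℤ) * ((p:ℤ) - t) := by
            have heq : (n:ℤ) * ((p:ℤ) - t) = H * p + p - (n:ℤ) * t := by
              linear_combination (-(p:ℤ)) * hHn
            rw [heq]
            exact hdvd'
          have hmpt := hmcancel _ hMnpt
          have htpm : t = p % m := hmodeq t p ht hmpt
          have hHn' : (partOf (Λ 0) (i+1) : ℤ) - ((i+1:ℕ):ℤ) + (conjOf (Λ t) j : ℤ) - (j:ℤ) + 1 + 1 = n := by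
            rw [← hHdef]; omega
          have hi0 : i = 0 := by push_cast at hHn'; omega
          have hj01 : j = 1 := by push_cast at hHn'; omega
          subst hi0; subst hj01
          simp only [Nat.zero_add, zero_add] at hHn' hj2 hA hi'len
          have hAeq : partOf (Λ 0) 1 = (Λ 0).sum := by push_cast at hHn'; omega
          have hCeq : conjOf (Λ t) 1 = (Λ t).sum := by push_cast at hHn'; omega
          have hsum2 : (Λ 0).sum + (Λ t).sum = n := by push_cast at hHn'; omega
          have hNs1 : 1 ≤ (Λ 0).sum := by
            have : 1 ≤ partOf (Λ 0) 1 := hj2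
            omega
          have hΛ0 : Λ 0 = [(Λ 0).sum] := eq_single _ hpos_s hAeq hNs1
          have hlen_t : (Λ t).length = (Λ t).sum := by
            rw [← conj_one (Λ t) hpos_t]; exact hCeq
          have hΛt : Λ t = List.replicate (Λ t).sum 1 := by
            have h9 := eq_replicate_of_len (Λ t) hpos_t hlen_t.symm
            rw [hlen_t] at h9
            exact h9
          refine ⟨(Λ t).sum, by omega, ?_, ?_, ?_⟩
          · rw [if_neg (by omega : ¬ (Λ t).sum = n), hΛ0]
            congr 1
            omega
          · rw [← htpm]; exact hΛt
          · intro u hu hu0 hur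
            have hut : u ≠ t := fun h => hur (h ▸ htpm)
            exact eq_nil_of_sum _ (hpos u hu)
              (htriple 0 t hs ht hst hsum2 u hu hu0 hut)
      · by_cases ht0 : t = 0
        · -- t = 0, s ≠ 0
          subst ht0
          set H := hookNum (Λ s) (Λ 0) (i+1) j with hHset
          have hdvd' : ((m*n:ℕ):ℤ) ∣ H * p + (n:ℤ) * s - p := by
            have h1 : b s = (n:ℤ) * s := by simp [hbdef, hs0]
            have h2 : b 0 = (p:ℤ) := by simp [hbdef]
            rw [← h1, ← h2]
            exact hdvd
          have hnE : (n:ℤ) ∣ H * p + (n:ℤ) * s - p := hnM.trans hdvd'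
          have h1 : (n:ℤ) ∣ (1 - H) * p := by
            have heq : (1 - H) * (p:ℤ) = (n:ℤ) * s - (H * p + (n:ℤ) * s - p) := by ring
            rw [heq]
            exact dvd_sub (dvd_mul_right _ _) hnE
          have h3 : (n:ℤ) ∣ 1 - H := hcopn.dvd_of_dvd_mul_right h1
          have hup : 1 - H ≤ n := by rw [hHdef]; push_cast; omega
          have hlow : -(n:ℤ) < 1 - H := by rw [hHdef]; push_cast; omega
          rcases int_dvd_interval n (1-H) hnZ h3 hlow hup with h0 | hHn
          · exfalso
            have hMns : ((m*n:ℕ):ℤ) ∣ (n:ℤ) * s := by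
              have heq : (n:ℤ) * s = (H * p + (n:ℤ) * s - p) - (H - 1) * p := by ring
              rw [heq, show (H:ℤ) - 1 = -(1 - H) by ring, h0, neg_zero, zero_mul, sub_zero]
              exact hdvd'
            have hms := hmcancel _ hMns
            have h5 := Int.le_of_dvd (by exact_mod_cast Nat.pos_of_ne_zero hs0) hms
            have : (s:ℤ) < m := by exact_mod_cast hs
            omega
          · -- 1 - H = n, i.e. H = 1 - n : shape case k = n
            have hMnsp : ((m*n:ℕ):ℤ) ∣ (n:ℤ) * ((p:ℤ) - s) := by
              have heq : (n:ℤ) * ((p:ℤ) - s) = -(H * p + (n:ℤ) * s - p) := by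
                linear_combination (-(p:ℤ)) * hHn
              rw [heq]
              exact dvd_neg.2 hdvd'
            have hmps := hmcancel _ hMnsp
            have hspm : s = p % m := hmodeq s p hs hmps
            have hHn' : (partOf (Λ s) (i+1) : ℤ) - ((i+1:ℕ):ℤ) + (conjOf (Λ 0) j : ℤ) - (j:ℤ) + 1 = 1 - n := by
              rw [← hHdef]; omega
            push_cast at hHn'
            have hieq : i + 1 = n := by omega
            have hlen : (Λ s).length = n := by omega
            have hNsn : (Λ s).sum = n := by omega
            have hΛs : Λ s = List.replicate n 1 := by
              have h9 := eq_replicate_of_len (Λ s) hpos_s (by omega)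
              rw [hlen] at h9
              exact h9
            have hN0 : (Λ 0).sum = 0 := by
              have := hpair s 0 hs (by omega) hs0
              omega
            have hΛ0 : Λ 0 = [] := eq_nil_of_sum _ (hpos 0 (by omega)) hN0
            refine ⟨n, le_refl n, ?_, ?_, ?_⟩
            · rw [if_pos rfl]; exact hΛ0
            · rw [← hspm]; exact hΛs
            · intro u hu hu0 hur
              have hus : u ≠ s := fun h => hur (h ▸ hspm)
              exact eq_nil_of_sum _ (hpos u hu)
                (htriple s 0 hs (by omega) hs0 (by omega) u hu hus hu0)
        · -- s ≠ 0, t ≠ 0, s ≠ t : impossible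
          exfalso
          set H := hookNum (Λ s) (Λ t) (i+1) j with hHset
          have hdvd' : ((m*n:ℕ):ℤ) ∣ H * p + (n:ℤ) * s - (n:ℤ) * t := by
            have h1 : b s = (n:ℤ) * s := by simp [hbdef, hs0]
            have h2 : b t = (n:ℤ) * t := by simp [hbdef, ht0]
            rw [← h1, ← h2]
            exact hdvd
          have hnE : (n:ℤ) ∣ H * p + (n:ℤ) * s - (n:ℤ) * t := hnM.trans hdvd'
          have h1 : (n:ℤ) ∣ H * p := by
            have heq : H * (p:ℤ) = (H * p + (n:ℤ) * s - (n:ℤ) * t) - (n:ℤ) * s + (n:ℤ) * t := by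
              ring
            rw [heq]
            exact dvd_add (dvd_sub hnE (dvd_mul_right _ _)) (dvd_mul_right _ _)
          have h3 : (n:ℤ) ∣ H := hcopn.dvd_of_dvd_mul_right h1
          have hup : H < n := by rw [hHdef]; push_cast; omega
          have hlow : -(n:ℤ) < H := by rw [hHdef]; push_cast; omega
          have hH0 : H = 0 := int_dvd_zero_of_bounds n H hnZ h3 hlow hup
          have hMnst : ((m*n:ℕ):ℤ) ∣ (n:ℤ) * ((s:ℤ) - t) := by
            have heq : (n:ℤ) * ((s:ℤ) - t) = H * p + (n:ℤ) * s - (n:ℤ) * t := by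
              rw [hH0]; ring
            rw [heq]
            exact hdvd'
          have hmst := hmcancel _ hMnst
          have : t = s % m := hmodeq t s ht hmst
          rw [Nat.mod_eq_of_lt hs] at this
          exact hst this.symm
  · rintro ⟨k, hk, h0, hr, hrest⟩
    by_cases hkn : k = n
    · rw [if_pos hkn] at h0
      rw [hkn] at hr
      have hlenr : (Λ (p % m)).length = n := by rw [hr]; simp
      have hnn : n - 1 + 1 = n := by omega
      refine ⟨p % m, Nat.mod_lt _ (by omega), n - 1, by omega, 1, ⟨le_refl 1, ?_⟩, 0,
        by omega, ?_⟩
      · rw [hr]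
        unfold partOf
        rw [List.getD_eq_getElem _ _ (by simp; omega)]
        simp
      · have hH : hookNum (Λ (p % m)) (Λ 0) (n - 1 + 1) 1 = 1 - n := by
          rw [hr, h0]
          unfold hookNum partOf conjOf
          rw [List.getD_eq_getElem _ _ (by simp; omega)]
          simp only [List.getElem_replicate, List.filter_nil, List.length_nil]
          push_cast [hnn]
          ring
        rw [hH]
        have hb1 : b (p % m) = (n:ℤ) * ((p % m : ℕ) : ℤ) := by simp [hbdef, hr0]
        have hb2 : b 0 = (p:ℤ) := by simp [hbdef]
        rw [hb1, hb2]
        refine ⟨-((p / m : ℕ):ℤ), ?_⟩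
        have hMeq : ((M:ℕ):ℤ) = (m:ℤ) * n := by rw [hMdef]; push_cast; ring
        rw [hMeq]
        linear_combination (-(n:ℤ)) * hpm
    · have hkn' : k < n := by omega
      rw [if_neg hkn] at h0
      refine ⟨0, by omega, 0, by rw [h0]; simp, 1, ⟨le_refl 1, ?_⟩, p % m,
        Nat.mod_lt _ (by omega), ?_⟩
      · rw [h0]
        show 1 ≤ partOf [n - k] 1
        unfold partOf
        simp
        omega
      · have hconj : conjOf (List.replicate k 1) 1 = k := by
          have := conj_one (List.replicate k 1) (by intro x hx; simp at hx; omega)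
          simpa using this
        have hH : hookNum (Λ 0) (Λ (p % m)) (0 + 1) 1 = (n:ℤ) - 1 := by
          rw [h0, hr]
          unfold hookNum
          rw [hconj]
          have hpart : partOf [n - k] (0 + 1) = n - k := rfl
          rw [hpart]
          push_cast [Nat.cast_sub (le_of_lt hkn')]
          ring
        rw [hH]
        have hb1 : b (p % m) = (n:ℤ) * ((p % m : ℕ) : ℤ) := by simp [hbdef, hr0]
        have hb2 : b 0 = (p:ℤ) := by simp [hbdef]
        rw [hb1, hb2]
        refine ⟨((p / m : ℕ):ℤ), ?_⟩
        have hMeq : ((M:ℕ):ℤ) = (m:ℤ) * n := by rw [hMdef]; push_cast; ring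
        rw [hMeq]
        linear_combination (n:ℤ) * hpm
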